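/- arXiv:2301.07658 — 3 statements merged into one kernel-verified Lean document; each statement's English description precedes it below -/
import Mathlib

section
/- For parameters β > 1 and γ ∈ ℝ, the tail sum ∑_{k ≥ n} k^{-β} log(k+1)^γ is asymptotically equivalent, as n → ∞, to n^{1-β} log(n)^γ / (β - 1). -/
open Filter Real

section TailSumAux
open Set MeasureTheory Topology


lemma aux_antitone (β γ : ℝ) (hβ : 1 < β) :
    ∃ M : ℕ, 1 ≤ M ∧ AntitoneOn (fun x : ℝ => x ^ (-β) * Real.log (x + 1) ^ γ)
      (Ici (M : ℝ)) := by
  have hβ0 : (0:ℝ) < β := by linarith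
  obtain ⟨M, hM1, hMlog⟩ : ∃ M : ℕ, 1 ≤ M ∧ |γ| / β ≤ Real.log (M : ℝ) := by
    refine ⟨max 1 ⌈Real.exp (|γ| / β)⌉₊, le_max_left _ _, ?_⟩
    have h1 : Real.exp (|γ| / β) ≤ (⌈Real.exp (|γ| / β)⌉₊ : ℝ) := Nat.le_ceil _
    have h2 : Real.exp (|γ| / β) ≤ ((max 1 ⌈Real.exp (|γ| / β)⌉₊ : ℕ) : ℝ) := by
      refine h1.trans ?_
      exact_mod_cast Nat.le_max_right 1 _
    calc |γ| / β = Real.log (Real.exp (|γ| / β)) := (Real.log_exp _).symm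
      _ ≤ Real.log _ := Real.log_le_log (Real.exp_pos _) h2
  refine ⟨M, hM1, ?_⟩
  have hM1' : (1:ℝ) ≤ (M:ℝ) := by exact_mod_cast hM1
  set h : ℝ → ℝ := fun x => -β * Real.log x + γ * Real.log (Real.log (x + 1)) with hh
  set h' : ℝ → ℝ := fun x => -β * x⁻¹ + γ * ((Real.log (x + 1))⁻¹ * (x + 1)⁻¹) with hh'
  have hder : ∀ x ∈ Ici (M:ℝ), HasDerivAt h (h' x) x := by
    intro x hx
    have hx1 : (1:ℝ) ≤ x := hM1'.trans hx
    have hx0 : (0:ℝ) < x := by linarith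
    have hlx : (0:ℝ) < Real.log (x + 1) := Real.log_pos (by linarith)
    have hd2 : HasDerivAt (fun x : ℝ => Real.log (x + 1)) (x + 1)⁻¹ x := by
      simpa [Function.comp_def] using (Real.hasDerivAt_log (by positivity : x + 1 ≠ 0)).comp x
        ((hasDerivAt_id x).add_const 1)
    have hd3 : HasDerivAt (fun x : ℝ => Real.log (Real.log (x + 1)))
        ((Real.log (x + 1))⁻¹ * (x + 1)⁻¹) x := by
      simpa [Function.comp_def] using (Real.hasDerivAt_log (ne_of_gt hlx)).comp x hd2
    exact ((Real.hasDerivAt_log (ne_of_gt hx0)).const_mul (-β)).add (hd3.const_mul γ)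
  have key : ∀ x ∈ Ici (M:ℝ), (fun x : ℝ => x ^ (-β) * Real.log (x + 1) ^ γ) x
      = Real.exp (h x) := by
    intro x hx
    have hx1 : (1:ℝ) ≤ x := hM1'.trans hx
    have hx0 : (0:ℝ) < x := by linarith
    have hlx : (0:ℝ) < Real.log (x + 1) := Real.log_pos (by linarith)
    have e1 : x ^ (-β) = Real.exp (-β * Real.log x) := by
      rw [Real.rpow_def_of_pos hx0]; ring_nf
    have e2 : Real.log (x + 1) ^ γ = Real.exp (γ * Real.log (Real.log (x + 1))) := by
      rw [Real.rpow_def_of_pos hlx]; ring_nf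
    show x ^ (-β) * Real.log (x + 1) ^ γ = _
    rw [e1, e2, ← Real.exp_add]
  have hanti : AntitoneOn h (Ici (M:ℝ)) := by
    apply antitoneOn_of_deriv_nonpos (convex_Ici _)
    · exact fun x hx => (hder x hx).continuousAt.continuousWithinAt
    · intro x hx
      rw [interior_Ici] at hx
      exact (hder x (Ioi_subset_Ici_self hx)).differentiableAt.differentiableWithinAt
    · intro x hx
      rw [interior_Ici] at hx
      rw [(hder x (Ioi_subset_Ici_self hx)).deriv]
      have hx1 : (1:ℝ) ≤ x := hM1'.trans hx.le
      have hx0 : (0:ℝ) < x := by linarith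
      have hlx : (0:ℝ) < Real.log (x + 1) := Real.log_pos (by linarith)
      have hγb : |γ| ≤ Real.log (x + 1) * β := by
        rw [← div_le_iff₀ hβ0]
        exact hMlog.trans (Real.log_le_log (by positivity) (by linarith [le_of_lt (mem_Ioi.1 hx)]))
      have step : γ * ((Real.log (x + 1))⁻¹ * (x + 1)⁻¹) ≤ β * x⁻¹ := by
        calc γ * ((Real.log (x + 1))⁻¹ * (x + 1)⁻¹)
            ≤ |γ| * ((Real.log (x + 1))⁻¹ * (x + 1)⁻¹) :=
              mul_le_mul_of_nonneg_right (le_abs_self γ) (by positivity)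
          _ ≤ (Real.log (x + 1) * β) * ((Real.log (x + 1))⁻¹ * (x + 1)⁻¹) :=
              mul_le_mul_of_nonneg_right hγb (by positivity)
          _ = β * (x + 1)⁻¹ := by field_simp
          _ ≤ β * x⁻¹ := by
              apply mul_le_mul_of_nonneg_left _ hβ0.le
              exact inv_anti₀ hx0 (by linarith)
      show -β * x⁻¹ + γ * ((Real.log (x + 1))⁻¹ * (x + 1)⁻¹) ≤ 0
      nlinarith [step]
  intro a ha b hb hab
  rw [key a ha, key b hb]
  exact Real.exp_le_exp.2 (hanti ha hb hab)

-- eventual bound: log(x+1)^γ ≤ x ^ r for any r > 0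
lemma aux_log_rpow_le (γ : ℝ) {r : ℝ} (hr : 0 < r) :
    ∀ᶠ x : ℝ in atTop, Real.log (x + 1) ^ γ ≤ x ^ r := by
  have h1 : (fun x : ℝ => Real.log x ^ |γ|) =o[atTop] fun x : ℝ => x ^ (r / 2) :=
    isLittleO_log_rpow_rpow_atTop |γ| (by positivity)
  have h2 : ∀ᶠ x : ℝ in atTop, Real.log x ^ |γ| ≤ x ^ (r / 2) := by
    filter_upwards [h1.bound one_pos, eventually_ge_atTop (1:ℝ),
      (tendsto_log_atTop.eventually_ge_atTop 1)] with x hx hx1 hlx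
    have h0 : (0:ℝ) ≤ Real.log x ^ |γ| := Real.rpow_nonneg (by linarith) _
    have h0' : (0:ℝ) ≤ x ^ (r/2) := Real.rpow_nonneg (by linarith) _
    calc Real.log x ^ |γ| = ‖Real.log x ^ |γ|‖ := (Real.norm_of_nonneg h0).symm
      _ ≤ 1 * ‖x ^ (r/2)‖ := hx
      _ = x ^ (r/2) := by rw [one_mul, Real.norm_of_nonneg h0']
  filter_upwards [eventually_ge_atTop (2:ℝ),
    (tendsto_log_atTop.comp (tendsto_atTop_add_const_right atTop 1 tendsto_id)).eventually_ge_atTop 1,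
    tendsto_log_atTop.eventually_ge_atTop 1,
    (tendsto_id.atTop_mul_atTop₀ tendsto_id).eventually h2] with x hx2 hl1 hl1' hsq
  simp only [Function.comp, id_eq] at hl1 hsq
  have hx0 : (0:ℝ) < x := by linarith
  have hlog : Real.log (x + 1) ≤ Real.log (x * x) := by
    apply Real.log_le_log (by linarith)
    nlinarith
  rcases le_or_gt γ 0 with hγ | hγ
  · have : Real.log (x + 1) ^ γ ≤ 1 := Real.rpow_le_one_of_one_le_of_nonpos hl1 hγ
    exact this.trans (Real.one_le_rpow (by linarith) (by positivity))
  · have habs : |γ| = γ := abs_of_pos hγ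
    calc Real.log (x + 1) ^ γ ≤ Real.log (x * x) ^ γ :=
          Real.rpow_le_rpow (by linarith) hlog hγ.le
      _ = Real.log (x * x) ^ |γ| := by rw [habs]
      _ ≤ (x * x) ^ (r / 2) := hsq
      _ = x ^ r := by
          rw [Real.mul_rpow hx0.le hx0.le, ← Real.rpow_add hx0]
          ring_nf

lemma aux_rpow_contOn (β : ℝ) : ContinuousOn (fun x : ℝ => x ^ (-β)) (Ici (1:ℝ)) := by
  intro x hx
  have hx0 : (0:ℝ) < x := lt_of_lt_of_le one_pos hx
  exact (Real.continuousAt_rpow_const x (-β) (Or.inl (ne_of_gt hx0))).continuousWithinAt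

lemma aux_log_contOn (γ : ℝ) :
    ContinuousOn (fun x : ℝ => Real.log (x + 1) ^ γ) (Ici (1:ℝ)) := by
  intro x hx
  have hx1 : (1:ℝ) ≤ x := hx
  have hlx : (0:ℝ) < Real.log (x + 1) := Real.log_pos (by linarith)
  apply ContinuousAt.continuousWithinAt
  have h1 : ContinuousAt (fun x : ℝ => Real.log (x + 1)) x :=
    (Real.continuousAt_log (by positivity)).comp (by fun_prop)
  exact ContinuousAt.comp (x := x) (f := fun x : ℝ => Real.log (x + 1))
    (Real.continuousAt_rpow_const _ γ (Or.inl (ne_of_gt hlx))) h1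

lemma aux_one_add_log_contOn (γ : ℝ) :
    ContinuousOn (fun x : ℝ => (1 + Real.log (x + 1)) ^ γ) (Ici (1:ℝ)) := by
  intro x hx
  have hx1 : (1:ℝ) ≤ x := hx
  have hlx : (0:ℝ) < Real.log (x + 1) := Real.log_pos (by linarith)
  apply ContinuousAt.continuousWithinAt
  have h1 : ContinuousAt (fun x : ℝ => 1 + Real.log (x + 1)) x := by
    apply ContinuousAt.add continuousAt_const
    exact (Real.continuousAt_log (by positivity)).comp (by fun_prop)
  exact ContinuousAt.comp (x := x) (f := fun x : ℝ => 1 + Real.log (x + 1))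
    (Real.continuousAt_rpow_const _ γ (Or.inl (by positivity))) h1

lemma aux_integrableOn (β : ℝ) (hβ : 1 < β) {g : ℝ → ℝ} (hgc : ContinuousOn g (Ici 1))
    (hg : ∀ᶠ x : ℝ in atTop, ‖g x‖ ≤ x ^ ((β - 1) / 2)) {c : ℝ} (hc : 1 ≤ c) :
    IntegrableOn (fun x : ℝ => x ^ (-β) * g x) (Ioi c) := by
  set f : ℝ → ℝ := fun x => x ^ (-β) * g x with hf
  have hfc : ContinuousOn f (Ici (1:ℝ)) := (aux_rpow_contOn β).mul hgc
  obtain ⟨A₀, hA₀⟩ := hg.exists_forall_of_atTop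
  set A : ℝ := max A₀ c with hAdef
  have hcA : c ≤ A := le_max_right _ _
  have hA1 : (1:ℝ) ≤ A := hc.trans hcA
  have hA0 : (0:ℝ) < A := by linarith
  have hmid : IntegrableOn f (Ioc c A) := by
    apply (ContinuousOn.integrableOn_Icc (hfc.mono ?_)).mono_set Ioc_subset_Icc_self
    intro x hx
    exact hc.trans hx.1
  have htail : IntegrableOn f (Ioi A) := by
    have hgint : IntegrableOn (fun x : ℝ => x ^ (-(β + 1) / 2)) (Ioi A) :=
      integrableOn_Ioi_rpow_of_lt (by linarith) hA0
    apply Integrable.mono hgint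
    · exact (hfc.mono (fun x hx => hA1.trans (le_of_lt hx))).aestronglyMeasurable
        measurableSet_Ioi
    · filter_upwards [ae_restrict_mem measurableSet_Ioi] with x hx
      have hx1 : (1:ℝ) < x := lt_of_le_of_lt hA1 hx
      have hx0 : (0:ℝ) < x := by linarith
      have hb : ‖g x‖ ≤ x ^ ((β - 1) / 2) :=
        hA₀ x (le_of_lt (lt_of_le_of_lt (le_max_left _ _) hx))
      have h1 : ‖f x‖ ≤ x ^ (-(β + 1) / 2) := by
        rw [hf]
        calc ‖x ^ (-β) * g x‖ = x ^ (-β) * ‖g x‖ := by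
              rw [norm_mul, Real.norm_of_nonneg (Real.rpow_nonneg hx0.le _)]
          _ ≤ x ^ (-β) * x ^ ((β - 1) / 2) :=
              mul_le_mul_of_nonneg_left hb (Real.rpow_nonneg hx0.le _)
          _ = x ^ (-(β + 1) / 2) := by
              rw [← Real.rpow_add hx0]; congr 1; ring
      refine h1.trans (le_of_eq ?_)
      rw [Real.norm_of_nonneg (Real.rpow_nonneg hx0.le _)]
  have : IntegrableOn f (Ioc c A ∪ Ioi A) := hmid.union htail
  rwa [Ioc_union_Ioi_eq_Ioi hcA] at this

lemma aux_integrable (β γ : ℝ) (hβ : 1 < β) {c : ℝ} (hc : 1 ≤ c) :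
    IntegrableOn (fun x : ℝ => x ^ (-β) * Real.log (x + 1) ^ γ) (Ioi c) := by
  apply aux_integrableOn β hβ (aux_log_contOn γ) _ hc
  filter_upwards [aux_log_rpow_le γ (show (0:ℝ) < (β-1)/2 by linarith),
    (tendsto_log_atTop.comp (tendsto_atTop_add_const_right atTop 1 tendsto_id)).eventually_ge_atTop 1]
    with x hx hl1
  simp only [Function.comp, id_eq] at hl1
  rwa [Real.norm_of_nonneg (Real.rpow_nonneg (by linarith) _)]

lemma aux_bound_integrable (β γ : ℝ) (hβ : 1 < β) :
    IntegrableOn (fun t : ℝ => t ^ (-β) * (1 + Real.log (t + 1)) ^ |γ|) (Ioi (1:ℝ)) := by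
  apply aux_integrableOn β hβ (aux_one_add_log_contOn |γ|) _ le_rfl
  have hr4 : (0:ℝ) < (β - 1) / 4 := by linarith
  filter_upwards [aux_log_rpow_le |γ| hr4, eventually_ge_atTop (max 2 ((2:ℝ)^|γ|) : ℝ),
    (tendsto_log_atTop.comp (tendsto_atTop_add_const_right atTop 1 tendsto_id)).eventually_ge_atTop 1,
    (tendsto_rpow_atTop hr4).eventually_ge_atTop ((2:ℝ)^|γ|)]
    with x hx hx2 hl1 hpow
  simp only [Function.comp, id_eq] at hl1
  have hx2' : (2:ℝ) ≤ x := le_trans (le_max_left _ _) hx2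
  have hx0 : (0:ℝ) < x := by linarith
  have h1 : (1:ℝ) + Real.log (x + 1) ≤ 2 * Real.log (x + 1) := by linarith
  have h2 : ((1:ℝ) + Real.log (x + 1)) ^ |γ| ≤ (2 * Real.log (x + 1)) ^ |γ| :=
    Real.rpow_le_rpow (by linarith) h1 (abs_nonneg γ)
  have h3 : (2 * Real.log (x + 1)) ^ |γ| = 2 ^ |γ| * Real.log (x + 1) ^ |γ| :=
    Real.mul_rpow (by norm_num) (by linarith)
  rw [Real.norm_of_nonneg (Real.rpow_nonneg (by linarith) _)]
  calc (1 + Real.log (x + 1)) ^ |γ| ≤ 2 ^ |γ| * Real.log (x + 1) ^ |γ| := by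
        rw [← h3]; exact h2
    _ ≤ x ^ ((β - 1) / 4) * x ^ ((β - 1) / 4) := by
        apply mul_le_mul hpow hx (Real.rpow_nonneg (by linarith) _) (Real.rpow_nonneg hx0.le _)
    _ = x ^ ((β - 1) / 2) := by rw [← Real.rpow_add hx0]; ring_nf


lemma aux_log3 : (1:ℝ) ≤ Real.log 3 := by
  rw [Real.le_log_iff_exp_le (by norm_num)]
  exact (Real.exp_one_lt_d9.le.trans (by norm_num))

lemma aux_integral_tendsto (β γ : ℝ) (hβ : 1 < β) :
    Tendsto (fun n : ℕ => (∫ x in Ioi ((n:ℝ)), x ^ (-β) * Real.log (x + 1) ^ γ) /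
      ((n:ℝ) ^ (1 - β) * Real.log (n:ℝ) ^ γ)) atTop (𝓝 (1 / (β - 1))) := by
  set f : ℝ → ℝ := fun x => x ^ (-β) * Real.log (x + 1) ^ γ with hfdef
  set F : ℕ → ℝ → ℝ :=
    fun n t => t ^ (-β) * (Real.log (n * t + 1) / Real.log n) ^ γ with hFdef
  -- basic facts for n ≥ 3
  have hlogn : ∀ n : ℕ, 3 ≤ n → (1:ℝ) ≤ Real.log n := by
    intro n hn
    refine aux_log3.trans (Real.log_le_log (by norm_num) ?_)
    exact_mod_cast hn
  -- DCT
  have hDCT : Tendsto (fun n : ℕ => ∫ t in Ioi (1:ℝ), F n t) atTop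
      (𝓝 (∫ t in Ioi (1:ℝ), t ^ (-β))) := by
    apply tendsto_integral_filter_of_dominated_convergence
      (fun t => t ^ (-β) * (1 + Real.log (t + 1)) ^ |γ|)
    · -- measurability
      filter_upwards [eventually_ge_atTop 3] with n hn
      have hln : (1:ℝ) ≤ Real.log n := hlogn n hn
      have hcont : ContinuousOn (F n) (Ici (1:ℝ)) := by
        intro t ht
        have ht1 : (1:ℝ) ≤ t := ht
        have ht0 : (0:ℝ) < t := by linarith
        have hn3 : (3:ℝ) ≤ (n:ℝ) := by exact_mod_cast hn
        have hnt : (1:ℝ) < (n:ℝ) * t + 1 := by nlinarith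
        have hlnt : (0:ℝ) < Real.log ((n:ℝ) * t + 1) := Real.log_pos hnt
        apply ContinuousAt.continuousWithinAt
        apply ContinuousAt.mul
        · exact Real.continuousAt_rpow_const t (-β) (Or.inl (ne_of_gt ht0))
        · have h1 : ContinuousAt (fun t : ℝ => Real.log ((n:ℝ) * t + 1) / Real.log n) t := by
            apply ContinuousAt.div_const
            exact (Real.continuousAt_log (by positivity)).comp (by fun_prop)
          refine ContinuousAt.comp (x := t)
            (f := fun t : ℝ => Real.log ((n:ℝ) * t + 1) / Real.log n)
            (Real.continuousAt_rpow_const _ γ (Or.inl ?_)) h1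
          positivity
      exact (hcont.mono (fun t ht => le_of_lt ht)).aestronglyMeasurable measurableSet_Ioi
    · -- bound
      filter_upwards [eventually_ge_atTop 3] with n hn
      filter_upwards [ae_restrict_mem measurableSet_Ioi] with t ht
      have ht1 : (1:ℝ) < t := ht
      have ht0 : (0:ℝ) < t := by linarith
      have hln : (1:ℝ) ≤ Real.log n := hlogn n hn
      have hn3 : (3:ℝ) ≤ (n:ℝ) := by exact_mod_cast hn
      have hnt : (1:ℝ) < (n:ℝ) * t + 1 := by nlinarith
      have hlt1 : (0:ℝ) < Real.log (t + 1) := Real.log_pos (by linarith)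
      have hR1 : (1:ℝ) ≤ Real.log ((n:ℝ) * t + 1) / Real.log n := by
        rw [le_div_iff₀ (by linarith)]
        rw [one_mul]
        apply Real.log_le_log (by linarith)
        nlinarith
      have hR2 : Real.log ((n:ℝ) * t + 1) / Real.log n ≤ 1 + Real.log (t + 1) := by
        rw [div_le_iff₀ (by linarith)]
        calc Real.log ((n:ℝ) * t + 1) ≤ Real.log ((n:ℝ) * (t + 1)) := by
              apply Real.log_le_log (by nlinarith)
              nlinarith
          _ = Real.log n + Real.log (t + 1) :=
              Real.log_mul (by positivity) (by positivity)
          _ ≤ (1 + Real.log (t + 1)) * Real.log n := by nlinarith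
      have hRpow : (Real.log ((n:ℝ) * t + 1) / Real.log n) ^ γ
          ≤ (1 + Real.log (t + 1)) ^ |γ| := by
        rcases le_or_gt 0 γ with hγ | hγ
        · calc (Real.log ((n:ℝ) * t + 1) / Real.log n) ^ γ
              ≤ (1 + Real.log (t + 1)) ^ γ :=
                Real.rpow_le_rpow (by linarith) hR2 hγ
            _ ≤ (1 + Real.log (t + 1)) ^ |γ| := by rw [abs_of_nonneg hγ]
        · calc (Real.log ((n:ℝ) * t + 1) / Real.log n) ^ γ ≤ 1 :=
                Real.rpow_le_one_of_one_le_of_nonpos hR1 hγ.le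
            _ ≤ (1 + Real.log (t + 1)) ^ |γ| :=
                Real.one_le_rpow (by linarith) (abs_nonneg γ)
      have hFnn : (0:ℝ) ≤ F n t := by
        apply mul_nonneg (Real.rpow_nonneg ht0.le _) (Real.rpow_nonneg ?_ _)
        positivity
      rw [Real.norm_of_nonneg hFnn]
      exact mul_le_mul_of_nonneg_left hRpow (Real.rpow_nonneg ht0.le _)
    · exact aux_bound_integrable β γ hβ
    · -- pointwise limit
      filter_upwards [ae_restrict_mem measurableSet_Ioi] with t ht
      have ht1 : (1:ℝ) < t := ht
      have ht0 : (0:ℝ) < t := by linarith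
      have hR : Tendsto (fun n : ℕ => Real.log ((n:ℝ) * t + 1) / Real.log n) atTop (𝓝 1) := by
        have hup : Tendsto (fun n : ℕ => 1 + Real.log (t + 1) * (Real.log (n:ℝ))⁻¹)
            atTop (𝓝 1) := by
          have h0 : Tendsto (fun n : ℕ => (Real.log (n:ℝ))⁻¹) atTop (𝓝 0) :=
            (tendsto_log_atTop.comp tendsto_natCast_atTop_atTop).inv_tendsto_atTop
          have := (h0.const_mul (Real.log (t + 1))).const_add 1
          simpa using this
        apply tendsto_of_tendsto_of_tendsto_of_le_of_le' tendsto_const_nhds hup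
        · filter_upwards [eventually_ge_atTop 3] with n hn
          have hln : (1:ℝ) ≤ Real.log n := hlogn n hn
          have hn3 : (3:ℝ) ≤ (n:ℝ) := by exact_mod_cast hn
          rw [le_div_iff₀ (by linarith), one_mul]
          apply Real.log_le_log (by linarith)
          nlinarith
        · filter_upwards [eventually_ge_atTop 3] with n hn
          have hln : (1:ℝ) ≤ Real.log n := hlogn n hn
          have hn3 : (3:ℝ) ≤ (n:ℝ) := by exact_mod_cast hn
          have hlt1 : (0:ℝ) < Real.log (t + 1) := Real.log_pos (by linarith)
          rw [div_le_iff₀ (by linarith)]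
          calc Real.log ((n:ℝ) * t + 1) ≤ Real.log ((n:ℝ) * (t + 1)) := by
                apply Real.log_le_log (by nlinarith)
                nlinarith
            _ = Real.log n + Real.log (t + 1) :=
                Real.log_mul (by positivity) (by positivity)
            _ ≤ (1 + Real.log (t + 1) * (Real.log (n:ℝ))⁻¹) * Real.log n := by
                have : Real.log (t + 1) * (Real.log (n:ℝ))⁻¹ * Real.log n
                    = Real.log (t + 1) := by
                  field_simp
                nlinarith [this]
      have hRpow : Tendsto (fun n : ℕ =>
          (Real.log ((n:ℝ) * t + 1) / Real.log n) ^ γ) atTop (𝓝 1) := by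
        have hcont : ContinuousAt (fun y : ℝ => y ^ γ) 1 :=
          Real.continuousAt_rpow_const 1 γ (Or.inl one_ne_zero)
        have := (hcont.tendsto.comp hR)
        simpa [Real.one_rpow, Function.comp_def] using this
      have := (tendsto_const_nhds (x := t ^ (-β)) (f := atTop)).mul hRpow
      rw [mul_one] at this
      exact this
  -- value of the limit integral
  have hval : (∫ t in Ioi (1:ℝ), t ^ (-β)) = 1 / (β - 1) := by
    rw [integral_Ioi_rpow_of_lt (by linarith) one_pos, Real.one_rpow]
    rw [div_eq_div_iff (by intro h; nlinarith : -β + 1 ≠ 0) (by intro h; nlinarith : β - 1 ≠ 0)]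
    ring
  rw [hval] at hDCT
  -- identify the ratio with ∫ F n for n ≥ 3
  apply hDCT.congr'
  filter_upwards [eventually_ge_atTop 3] with n hn
  have hln : (1:ℝ) ≤ Real.log n := hlogn n hn
  have hn3 : (3:ℝ) ≤ (n:ℝ) := by exact_mod_cast hn
  have hn0 : (0:ℝ) < (n:ℝ) := by linarith
  have hsub : (∫ x in Ioi (1:ℝ), f ((n:ℝ) * x)) = (n:ℝ)⁻¹ • ∫ x in Ioi ((n:ℝ)), f x := by
    have := integral_comp_mul_left_Ioi f 1 hn0
    rwa [mul_one] at this
  have hcongr : (∫ x in Ioi (1:ℝ), f ((n:ℝ) * x))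
      = ((n:ℝ) ^ (-β) * Real.log (n:ℝ) ^ γ) * ∫ t in Ioi (1:ℝ), F n t := by
    rw [← integral_const_mul]
    apply setIntegral_congr_fun measurableSet_Ioi
    intro t ht
    have ht1 : (1:ℝ) < t := ht
    have ht0 : (0:ℝ) < t := by linarith
    have hnt : (1:ℝ) < (n:ℝ) * t + 1 := by nlinarith
    have hlnt : (0:ℝ) < Real.log ((n:ℝ) * t + 1) := Real.log_pos hnt
    have hlnpos : (0:ℝ) < Real.log n := by linarith
    show ((n:ℝ) * t) ^ (-β) * Real.log ((n:ℝ) * t + 1) ^ γ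
      = (n:ℝ) ^ (-β) * Real.log (n:ℝ) ^ γ * (t ^ (-β) * (Real.log ((n:ℝ)*t+1) / Real.log n) ^ γ)
    rw [Real.mul_rpow hn0.le ht0.le, Real.div_rpow hlnt.le hlnpos.le]
    field_simp [ne_of_gt (Real.rpow_pos_of_pos hlnpos γ)]
  have hIoi : (∫ x in Ioi ((n:ℝ)), f x)
      = (n:ℝ) * (((n:ℝ) ^ (-β) * Real.log (n:ℝ) ^ γ) * ∫ t in Ioi (1:ℝ), F n t) := by
    rw [← hcongr, hsub, smul_eq_mul, ← mul_assoc, mul_inv_cancel₀ (ne_of_gt hn0), one_mul]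
  have h1 : (n:ℝ) * ((n:ℝ) ^ (-β) * Real.log (n:ℝ) ^ γ)
      = (n:ℝ) ^ (1 - β) * Real.log (n:ℝ) ^ γ := by
    rw [← mul_assoc]
    congr 1
    rw [show (1 - β) = 1 + -β by ring,
      Real.rpow_one_add' hn0.le (by intro h; nlinarith [hβ] : 1 + -β ≠ 0)]
  have hden : (n:ℝ) ^ (1 - β) * Real.log (n:ℝ) ^ γ ≠ 0 :=
    ne_of_gt (mul_pos (Real.rpow_pos_of_pos hn0 _) (Real.rpow_pos_of_pos (by linarith) _))
  show (∫ x in Ioi (1:ℝ), F n x) = (∫ x in Ioi ((n:ℝ)), f x) / ((n:ℝ) ^ (1 - β) * Real.log (n:ℝ) ^ γ)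
  rw [hIoi, ← mul_assoc, h1, mul_comm, mul_div_assoc, div_self hden, mul_one]

lemma aux_contOn' (β γ : ℝ) :
    ContinuousOn (fun x : ℝ => x ^ (-β) * Real.log (x + 1) ^ γ) (Ici (1:ℝ)) :=
  (aux_rpow_contOn β).mul (aux_log_contOn γ)

lemma aux_iUnion_Ioc (a : ℝ) : (⋃ k : ℕ, Ioc (a + k) (a + k + 1)) = Ioi a := by
  ext x
  simp only [mem_iUnion, mem_Ioc, mem_Ioi]
  constructor
  · rintro ⟨k, h1, h2⟩
    have : (0:ℝ) ≤ (k:ℝ) := Nat.cast_nonneg k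
    linarith
  · intro hx
    set m := ⌈x - a⌉₊ with hm
    have hm1 : 1 ≤ m := by
      rw [hm]
      apply Nat.one_le_ceil_iff.mpr
      linarith
    refine ⟨m - 1, ?_, ?_⟩
    · have h1 : ((m - 1 : ℕ) : ℝ) < x - a := by
        rw [← Nat.lt_ceil]
        omega
      linarith
    · have h2 : x - a ≤ m := Nat.le_ceil _
      have h3 : ((m - 1 : ℕ) : ℝ) = (m:ℝ) - 1 := by
        rw [Nat.cast_sub hm1]; norm_num
      rw [h3]
      linarith

lemma aux_comparison (β γ : ℝ) (hβ : 1 < β) {M : ℕ} (hM : 1 ≤ M)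
    (hA : AntitoneOn (fun x : ℝ => x ^ (-β) * Real.log (x + 1) ^ γ) (Ici (M:ℝ)))
    {n : ℕ} (hn : M ≤ n) :
    Summable (fun k : ℕ => ((n:ℝ) + k) ^ (-β) * Real.log (((n:ℝ) + k) + 1) ^ γ) ∧
    (∫ x in Ioi ((n:ℝ)), x ^ (-β) * Real.log (x + 1) ^ γ)
      ≤ (∑' k : ℕ, ((n:ℝ) + k) ^ (-β) * Real.log (((n:ℝ) + k) + 1) ^ γ) ∧
    (∑' k : ℕ, ((n:ℝ) + k) ^ (-β) * Real.log (((n:ℝ) + k) + 1) ^ γ)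
      ≤ (n:ℝ) ^ (-β) * Real.log ((n:ℝ) + 1) ^ γ
        + ∫ x in Ioi ((n:ℝ)), x ^ (-β) * Real.log (x + 1) ^ γ := by
  set f : ℝ → ℝ := fun x => x ^ (-β) * Real.log (x + 1) ^ γ with hfdef
  have hM1 : (1:ℝ) ≤ (M:ℝ) := by exact_mod_cast hM
  have hn1 : (1:ℝ) ≤ (n:ℝ) := by
    have : (M:ℝ) ≤ (n:ℝ) := by exact_mod_cast hn
    linarith
  have hnM : (M:ℝ) ≤ (n:ℝ) := by exact_mod_cast hn
  have hfnn : ∀ x : ℝ, 0 < x → 0 ≤ f x := by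
    intro x hx
    exact mul_nonneg (Real.rpow_nonneg hx.le _) (Real.rpow_nonneg (Real.log_nonneg (by linarith)) _)
  have hInt : IntegrableOn f (Ioi ((n:ℝ))) := aux_integrable β γ hβ hn1
  set s : ℕ → Set ℝ := fun k => Ioc ((n:ℝ) + k) ((n:ℝ) + k + 1) with hsdef
  have hsm : ∀ k, MeasurableSet (s k) := fun k => measurableSet_Ioc
  have hsd : Pairwise (Function.onFun Disjoint s) := by
    intro i j hij
    rcases hij.lt_or_gt with h | h
    · apply Set.Ioc_disjoint_Ioc.mpr
      have hij' : ((i:ℝ)) + 1 ≤ (j:ℝ) := by exact_mod_cast Nat.succ_le_of_lt h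
      exact le_trans (min_le_left _ _) (le_trans (by linarith) (le_max_right _ _))
    · apply Set.Ioc_disjoint_Ioc.mpr
      have hij' : ((j:ℝ)) + 1 ≤ (i:ℝ) := by exact_mod_cast Nat.succ_le_of_lt h
      exact le_trans (min_le_right _ _) (le_trans (by linarith) (le_max_left _ _))
  have hsu : (⋃ k, s k) = Ioi ((n:ℝ)) := aux_iUnion_Ioc _
  have hIntU : IntegrableOn f (⋃ k, s k) := by rwa [hsu]
  have hHasSum : HasSum (fun k => ∫ x in s k, f x) (∫ x in ⋃ k, s k, f x) :=
    hasSum_integral_iUnion hsm hsd hIntU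
  have hg : Summable (fun k => ∫ x in s k, f x) := hHasSum.summable
  have hgsum : (∑' k, ∫ x in s k, f x) = ∫ x in Ioi ((n:ℝ)), f x := by
    rw [hHasSum.tsum_eq, hsu]
  have hmem : ∀ (k : ℕ) (x : ℝ), x ∈ s k → (M:ℝ) ≤ x ∧ (n:ℝ) + k ≤ x ∧ x ≤ (n:ℝ) + k + 1 := by
    intro k x hx
    obtain ⟨h1, h2⟩ := hx
    have : (0:ℝ) ≤ (k:ℝ) := Nat.cast_nonneg k
    exact ⟨by linarith, h1.le, h2⟩
  -- lower : ∫ over s k ≤ f (n+k)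
  have hlow : ∀ k : ℕ, (∫ x in s k, f x) ≤ f ((n:ℝ) + k) := by
    intro k
    have hmes : volume (s k) < ⊤ := by
      rw [hsdef]
      simp [Real.volume_Ioc]
    have hb : ∀ x ∈ s k, ‖f x‖ ≤ f ((n:ℝ) + k) := by
      intro x hx
      obtain ⟨hxM, hxl, hxu⟩ := hmem k x hx
      rw [Real.norm_of_nonneg (hfnn x (by linarith))]
      have hk0 : (0:ℝ) ≤ (k:ℝ) := Nat.cast_nonneg k
      exact hA (show (M:ℝ) ≤ (n:ℝ) + k by linarith) hxM hxl
    have hmeas : AEStronglyMeasurable f (volume.restrict (s k)) := by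
      apply ((aux_contOn' β γ).mono ?_).aestronglyMeasurable (hsm k)
      intro x hx
      obtain ⟨hxM, hxl, hxu⟩ := hmem k x hx
      exact le_trans hM1 hxM
    calc (∫ x in s k, f x) ≤ ‖∫ x in s k, f x‖ := le_abs_self _
      _ ≤ f ((n:ℝ) + k) * (volume (s k)).toReal :=
          norm_setIntegral_le_of_norm_le_const hmes hb
      _ = f ((n:ℝ) + k) := by
          rw [hsdef]
          simp [Real.volume_Ioc]
  -- upper : f (n+k+1) ≤ ∫ over s k
  have hup : ∀ k : ℕ, f ((n:ℝ) + (k + 1)) ≤ ∫ x in s k, f x := by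
    intro k
    have hmes : volume (s k) ≠ ⊤ := by
      rw [hsdef]; simp [Real.volume_Ioc]
    have hb : ∀ x ∈ s k, f ((n:ℝ) + (k + 1)) ≤ f x := by
      intro x hx
      obtain ⟨hxM, hxl, hxu⟩ := hmem k x hx
      have hk0 : (0:ℝ) ≤ (k:ℝ) := Nat.cast_nonneg k
      exact hA hxM (show (M:ℝ) ≤ (n:ℝ) + ((k:ℝ) + 1) by linarith) (by linarith)
    have := setIntegral_ge_of_const_le (hsm k) hmes hb (hInt.mono_set (by rw [← hsu]; exact subset_iUnion s k))
    calc f ((n:ℝ) + (k + 1)) = f ((n:ℝ) + (k + 1)) * (volume (s k)).toReal := by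
          rw [hsdef]; simp [Real.volume_Ioc]
      _ ≤ ∫ x in s k, f x := by rw [smul_eq_mul, mul_comm] at this; exact this
  -- summability
  have hsummable : Summable (fun k : ℕ => f ((n:ℝ) + k)) := by
    rw [← summable_nat_add_iff 1]
    apply Summable.of_nonneg_of_le _ (fun k => ?_) hg
    · intro k
      apply hfnn
      push_cast
      linarith [Nat.cast_nonneg (α := ℝ) k]
    · have := hup k
      push_cast at this ⊢
      exact this
  refine ⟨hsummable, ?_, ?_⟩
  · rw [← hgsum]
    exact Summable.tsum_le_tsum hlow hg hsummable
  · have hshift : (∑' k : ℕ, f ((n:ℝ) + k)) = f ((n:ℝ) + (0:ℕ)) + ∑' k : ℕ, f ((n:ℝ) + (k + 1)) := by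
      rw [hsummable.tsum_eq_zero_add]
      congr 1
      apply tsum_congr
      intro k
      congr 1
      push_cast
      ring
    calc (∑' k : ℕ, f ((n:ℝ) + k)) = f ((n:ℝ) + (0:ℕ)) + ∑' k : ℕ, f ((n:ℝ) + (k + 1)) := hshift
      _ ≤ f ((n:ℝ)) + ∑' k, ∫ x in s k, f x := by
          apply add_le_add
          · simp
          · apply Summable.tsum_le_tsum (fun k => hup k) _ hg
            rw [← summable_nat_add_iff 1] at hsummable
            apply hsummable.congr
            intro k
            push_cast
            ring_nf
      _ = f ((n:ℝ)) + ∫ x in Ioi ((n:ℝ)), f x := by rw [hgsum]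

/-- Tail sum `∑_{k ≥ n} k^{-β} log(k+1)^γ` is asymptotically `n^{1-β} log(n)^γ / (β-1)`. -/
theorem tail_sum_asymptotic (β γ : ℝ) (hβ : 1 < β) :
    Tendsto (fun n : ℕ =>
      (∑' k : ℕ, ((n + k : ℕ) : ℝ) ^ (-β) * Real.log (((n + k : ℕ) : ℝ) + 1) ^ γ) /
        ((n : ℝ) ^ (1 - β) * Real.log (n : ℝ) ^ γ / (β - 1)))
      atTop (nhds 1) := by
  obtain ⟨M, hM1, hA⟩ := aux_antitone β γ hβ
  set f : ℝ → ℝ := fun x => x ^ (-β) * Real.log (x + 1) ^ γ with hfdef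
  set b : ℕ → ℝ := fun n => (n:ℝ) ^ (1 - β) * Real.log (n:ℝ) ^ γ with hbdef
  set I : ℕ → ℝ := fun n => ∫ x in Ioi ((n:ℝ)), f x with hIdef
  set S : ℕ → ℝ := fun n => ∑' k : ℕ, f ((n:ℝ) + k) with hSdef
  have hβ1 : β - 1 ≠ 0 := by intro h; nlinarith
  have hEq : ∀ n : ℕ,
      (∑' k : ℕ, ((n + k : ℕ) : ℝ) ^ (-β) * Real.log (((n + k : ℕ) : ℝ) + 1) ^ γ) = S n := by
    intro n
    apply tsum_congr
    intro k
    push_cast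
    rfl
  have hI : Tendsto (fun n : ℕ => I n / b n) atTop (𝓝 (1 / (β - 1))) :=
    aux_integral_tendsto β γ hβ
  -- f(n)/b(n) → 0
  have hf0 : Tendsto (fun n : ℕ => f (n:ℝ) / b n) atTop (𝓝 0) := by
    have hupb : Tendsto (fun n : ℕ => (2:ℝ) ^ |γ| / (n:ℝ)) atTop (𝓝 0) :=
      tendsto_const_div_atTop_nhds_zero_nat _
    apply tendsto_of_tendsto_of_tendsto_of_le_of_le' tendsto_const_nhds hupb
    · filter_upwards [eventually_ge_atTop 3] with n hn
      have hn3 : (3:ℝ) ≤ (n:ℝ) := by exact_mod_cast hn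
      have hbpos : (0:ℝ) < b n :=
        mul_pos (Real.rpow_pos_of_pos (by linarith) _)
          (Real.rpow_pos_of_pos (Real.log_pos (by linarith)) _)
      apply div_nonneg _ hbpos.le
      exact mul_nonneg (Real.rpow_nonneg (by linarith) _)
        (Real.rpow_nonneg (Real.log_nonneg (by linarith)) _)
    · filter_upwards [eventually_ge_atTop 3] with n hn
      have hn3 : (3:ℝ) ≤ (n:ℝ) := by exact_mod_cast hn
      have hn0 : (0:ℝ) < (n:ℝ) := by linarith
      have hln1 : (1:ℝ) ≤ Real.log n := by
        refine aux_log3.trans (Real.log_le_log (by norm_num) hn3)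
      have hlnpos : (0:ℝ) < Real.log n := by linarith
      have hbpos : (0:ℝ) < b n :=
        mul_pos (Real.rpow_pos_of_pos hn0 _) (Real.rpow_pos_of_pos hlnpos _)
      have hclaim : Real.log ((n:ℝ) + 1) ^ γ ≤ 2 ^ |γ| * Real.log (n:ℝ) ^ γ := by
        have hmono : Real.log ((n:ℝ) + 1) ≤ 2 * Real.log n := by
          calc Real.log ((n:ℝ) + 1) ≤ Real.log ((n:ℝ) * n) := by
                apply Real.log_le_log (by linarith)
                nlinarith
            _ = Real.log n + Real.log n := Real.log_mul (by linarith) (by linarith)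
            _ = 2 * Real.log n := by ring
        rcases le_or_gt 0 γ with hγ | hγ
        · calc Real.log ((n:ℝ) + 1) ^ γ ≤ (2 * Real.log n) ^ γ :=
              Real.rpow_le_rpow (Real.log_nonneg (by linarith)) hmono hγ
            _ = 2 ^ γ * Real.log (n:ℝ) ^ γ := Real.mul_rpow (by norm_num) (by linarith)
            _ ≤ 2 ^ |γ| * Real.log (n:ℝ) ^ γ := by
                apply mul_le_mul_of_nonneg_right _ (Real.rpow_nonneg (by linarith) _)
                exact Real.rpow_le_rpow_of_exponent_le one_le_two (le_abs_self γ)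
        · calc Real.log ((n:ℝ) + 1) ^ γ ≤ Real.log (n:ℝ) ^ γ :=
              Real.rpow_le_rpow_of_nonpos hlnpos (Real.log_le_log (by linarith) (by linarith)) hγ.le
            _ ≤ 2 ^ |γ| * Real.log (n:ℝ) ^ γ := by
                nlinarith [Real.one_le_rpow (one_le_two (α := ℝ)) (abs_nonneg γ),
                  Real.rpow_nonneg (le_of_lt hlnpos) γ,
                  Real.rpow_pos_of_pos hlnpos γ]
      rw [div_le_div_iff₀ hbpos hn0]
      have hmul : f (n:ℝ) * (n:ℝ) = (n:ℝ) ^ (1 - β) * Real.log ((n:ℝ) + 1) ^ γ := by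
        show (n:ℝ) ^ (-β) * Real.log ((n:ℝ) + 1) ^ γ * (n:ℝ) = _
        rw [show (1 - β) = 1 + -β by ring, Real.rpow_one_add' hn0.le (by intro h; nlinarith)]
        ring
      rw [hmul, hbdef]
      have := mul_le_mul_of_nonneg_left hclaim (le_of_lt (Real.rpow_pos_of_pos hn0 (1 - β)))
      calc (n:ℝ) ^ (1 - β) * Real.log ((n:ℝ) + 1) ^ γ
          ≤ (n:ℝ) ^ (1 - β) * (2 ^ |γ| * Real.log (n:ℝ) ^ γ) := this
        _ = 2 ^ |γ| * ((n:ℝ) ^ (1 - β) * Real.log (n:ℝ) ^ γ) := by ring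
  -- lower and upper sequences
  have hlowT : Tendsto (fun n : ℕ => I n / (b n / (β - 1))) atTop (𝓝 1) := by
    have h1 : Tendsto (fun n : ℕ => (β - 1) * (I n / b n)) atTop (𝓝 ((β - 1) * (1 / (β - 1)))) :=
      hI.const_mul (β - 1)
    rw [mul_one_div, div_self hβ1] at h1
    apply h1.congr
    intro n
    rw [div_div_eq_mul_div]
    ring
  have hupT : Tendsto (fun n : ℕ => (f (n:ℝ) + I n) / (b n / (β - 1))) atTop (𝓝 1) := by
    have h0 : Tendsto (fun n : ℕ => (β - 1) * (f (n:ℝ) / b n)) atTop (𝓝 ((β - 1) * 0)) :=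
      hf0.const_mul (β - 1)
    rw [mul_zero] at h0
    have h1 : Tendsto (fun n : ℕ => (β - 1) * (I n / b n)) atTop (𝓝 ((β - 1) * (1 / (β - 1)))) :=
      hI.const_mul (β - 1)
    rw [mul_one_div, div_self hβ1] at h1
    have h2 := h0.add h1
    rw [zero_add] at h2
    apply h2.congr
    intro n
    rw [div_div_eq_mul_div, mul_comm (β - 1) (f (n:ℝ) / b n), mul_comm (β - 1) (I n / b n),
      div_mul_eq_mul_div, div_mul_eq_mul_div, ← add_div]
    congr 1
    ring
  -- squeeze
  have hmain : Tendsto (fun n : ℕ => S n / (b n / (β - 1))) atTop (𝓝 1) := by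
    apply tendsto_of_tendsto_of_tendsto_of_le_of_le' hlowT hupT
    · filter_upwards [eventually_ge_atTop (max M 3)] with n hn
      have hnM : M ≤ n := le_trans (le_max_left _ _) hn
      have hn3 : (3:ℝ) ≤ (n:ℝ) := by exact_mod_cast le_trans (le_max_right _ _) hn
      have hbpos : (0:ℝ) < b n / (β - 1) := by
        apply div_pos _ (by linarith)
        exact mul_pos (Real.rpow_pos_of_pos (by linarith) _)
          (Real.rpow_pos_of_pos (Real.log_pos (by linarith)) _)
      obtain ⟨hsum, hlo, hhi⟩ := aux_comparison β γ hβ hM1 hA hnM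
      exact div_le_div_of_nonneg_right hlo hbpos.le |>.trans_eq rfl
    · filter_upwards [eventually_ge_atTop (max M 3)] with n hn
      have hnM : M ≤ n := le_trans (le_max_left _ _) hn
      have hn3 : (3:ℝ) ≤ (n:ℝ) := by exact_mod_cast le_trans (le_max_right _ _) hn
      have hbpos : (0:ℝ) < b n / (β - 1) := by
        apply div_pos _ (by linarith)
        exact mul_pos (Real.rpow_pos_of_pos (by linarith) _)
          (Real.rpow_pos_of_pos (Real.log_pos (by linarith)) _)
      obtain ⟨hsum, hlo, hhi⟩ := aux_comparison β γ hβ hM1 hA hnM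
      exact div_le_div_of_nonneg_right hhi hbpos.le |>.trans_eq rfl
  apply hmain.congr
  intro n
  rw [hEq n]


end TailSumAux
end

section
/- For parameters β' < 1 and γ ∈ ℝ, the partial sum ∑_{k=1}^{n} k^{-β'} log(k+1)^γ is asymptotically equivalent, as n → ∞, to n^{1-β'} log(n)^γ / (1 - β'). -/
set_option maxHeartbeats 1600000


open Filter Real

private lemma aux_slope {f : ℝ → ℝ} {d : ℝ} (hf : HasDerivAt f d 1) {v : ℕ → ℝ}
    (hv : Tendsto v atTop (nhds 1)) (hne : ∀ᶠ k in atTop, v k ≠ 1) :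
    Tendsto (fun k => (f (v k) - f 1) / (v k - 1)) atTop (nhds d) := by
  have h := hasDerivAt_iff_tendsto_slope.mp hf
  have hv' : Tendsto v atTop (nhdsWithin 1 {1}ᶜ) :=
    tendsto_nhdsWithin_iff.mpr ⟨hv, hne.mono fun k hk => hk⟩
  have h2 := h.comp hv'
  refine h2.congr fun k => ?_
  simp [Function.comp, slope_def_field]

private lemma aux_id (x A W Lg L s Ka aa : ℝ) (hx : x ≠ 0) (ha : aa ≠ 0) (hL : L ≠ 0)
    (hs : s ≠ 0) (hLg : Lg ≠ 0) (hKa : Ka ≠ 0) :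
    (A - 1) / (1 + 1 / x - 1) / aa
      + (W - 1) / ((L - s) / L - 1) * ((s - Real.log 1) / (1 + 1 / x - 1)) * (1 / L) / aa
    = (Ka * A * Lg / aa - Ka * (W * Lg) / aa) / (Ka / x * Lg) := by
  rw [Real.log_one, show (1 : ℝ) + 1 / x - 1 = 1 / x by ring,
    show (L - s) / L - 1 = -(s / L) by field_simp; ring]
  field_simp
  ring

/-- Partial sum `∑_{k=1}^n k^{-β'} log(k+1)^γ` is asymptotically `n^{1-β'} log(n)^γ / (1-β')`. -/
theorem partial_sum_asymptotic (β' γ : ℝ) (hβ' : β' < 1) :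
    Tendsto (fun n : ℕ =>
      (∑ k ∈ Finset.Icc 1 n, (k : ℝ) ^ (-β') * Real.log ((k : ℝ) + 1) ^ γ) /
        ((n : ℝ) ^ (1 - β') * Real.log (n : ℝ) ^ γ / (1 - β')))
      atTop (nhds 1) := by
  have ha : 0 < 1 - β' := by linarith
  set a : ℝ := 1 - β' with ha_def
  set f : ℕ → ℝ := fun k => (k : ℝ) ^ (-β') * Real.log ((k : ℝ) + 1) ^ γ with hf_def
  set G : ℕ → ℝ := fun n => (n : ℝ) ^ a * Real.log (n : ℝ) ^ γ / a with hG_def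
  -- basic limits
  have hcast : Tendsto (fun n : ℕ => (n : ℝ)) atTop atTop := tendsto_natCast_atTop_atTop
  have h1k : Tendsto (fun k : ℕ => 1 / (k : ℝ)) atTop (nhds 0) :=
    tendsto_one_div_atTop_nhds_zero_nat
  have hvk : Tendsto (fun k : ℕ => 1 + 1 / (k : ℝ)) atTop (nhds 1) := by
    simpa using tendsto_const_nhds.add h1k
  have hvne : ∀ᶠ k : ℕ in atTop, (1 : ℝ) + 1 / (k : ℝ) ≠ 1 := by
    filter_upwards [eventually_ge_atTop 1] with k hk
    have hk0 : (0 : ℝ) < (k : ℝ) := by exact_mod_cast hk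
    have : (0 : ℝ) < 1 / (k : ℝ) := by positivity
    linarith
  have hL1 : Tendsto (fun k : ℕ => Real.log ((k : ℝ) + 1)) atTop atTop :=
    Real.tendsto_log_atTop.comp (tendsto_atTop_add_const_right _ 1 hcast)
  have hL0 : Tendsto (fun k : ℕ => Real.log (k : ℝ)) atTop atTop :=
    Real.tendsto_log_atTop.comp hcast
  have hs0 : Tendsto (fun k : ℕ => Real.log (1 + 1 / (k : ℝ))) atTop (nhds 0) := by
    have h := (Real.continuousAt_log one_ne_zero).tendsto.comp hvk
    simpa [Real.log_one, Function.comp_def] using h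
  have hinvL1 : Tendsto (fun k : ℕ => 1 / Real.log ((k : ℝ) + 1)) atTop (nhds 0) := by
    simpa [one_div, Pi.inv_def] using hL1.inv_tendsto_atTop
  have hinvL0 : Tendsto (fun k : ℕ => 1 / Real.log (k : ℝ)) atTop (nhds 0) := by
    simpa [one_div, Pi.inv_def] using hL0.inv_tendsto_atTop
  have hlogsplit : ∀ k : ℕ, 1 ≤ k →
      Real.log ((k : ℝ) + 1) = Real.log (k : ℝ) + Real.log (1 + 1 / (k : ℝ)) := by
    intro k hk
    have hk0 : (0 : ℝ) < (k : ℝ) := by exact_mod_cast hk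
    rw [show (1 : ℝ) + 1 / (k : ℝ) = ((k : ℝ) + 1) / (k : ℝ) by field_simp]
    rw [Real.log_div (by positivity) (ne_of_gt hk0)]
    ring
  -- the sequence u
  set u : ℕ → ℝ := fun k => Real.log (k : ℝ) / Real.log ((k : ℝ) + 1) with hu_def
  have hu1 : Tendsto u atTop (nhds 1) := by
    have h : Tendsto (fun k : ℕ =>
        1 - Real.log (1 + 1 / (k : ℝ)) * (1 / Real.log ((k : ℝ) + 1))) atTop (nhds 1) := by
      simpa using tendsto_const_nhds.sub (hs0.mul hinvL1)
    refine h.congr' ?_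
    filter_upwards [eventually_ge_atTop 2] with k hk
    have hk2 : (2 : ℝ) ≤ (k : ℝ) := by exact_mod_cast hk
    have hL1pos : 0 < Real.log ((k : ℝ) + 1) := Real.log_pos (by linarith)
    have hsplit := hlogsplit k (by omega)
    have hL0eq : Real.log (k : ℝ) = Real.log ((k : ℝ) + 1) - Real.log (1 + 1 / (k : ℝ)) := by
      linarith
    simp only [hu_def]
    rw [hL0eq]
    field_simp
  have hune : ∀ᶠ k : ℕ in atTop, u k ≠ 1 := by
    filter_upwards [eventually_ge_atTop 2] with k hk
    have hk2 : (2 : ℝ) ≤ (k : ℝ) := by exact_mod_cast hk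
    have hlt : Real.log (k : ℝ) < Real.log ((k : ℝ) + 1) :=
      Real.log_lt_log (by linarith) (by linarith)
    have hL1pos : 0 < Real.log ((k : ℝ) + 1) := Real.log_pos (by linarith)
    exact ne_of_lt ((div_lt_one hL1pos).mpr hlt)
  -- slope limits
  have hP : Tendsto (fun k : ℕ => ((1 + 1 / (k : ℝ)) ^ a - 1) / ((1 + 1 / (k : ℝ)) - 1))
      atTop (nhds a) := by
    have hd : HasDerivAt (fun x : ℝ => x ^ a) (a * (1 : ℝ) ^ (a - 1)) 1 :=
      Real.hasDerivAt_rpow_const (Or.inl one_ne_zero)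
    have h := aux_slope hd hvk hvne
    simpa [Real.one_rpow] using h
  have hQ : Tendsto (fun k : ℕ => (u k ^ γ - 1) / (u k - 1)) atTop (nhds γ) := by
    have hd : HasDerivAt (fun x : ℝ => x ^ γ) (γ * (1 : ℝ) ^ (γ - 1)) 1 :=
      Real.hasDerivAt_rpow_const (Or.inl one_ne_zero)
    have h := aux_slope hd hu1 hune
    simpa [Real.one_rpow] using h
  have hR : Tendsto (fun k : ℕ =>
      (Real.log (1 + 1 / (k : ℝ)) - Real.log 1) / ((1 + 1 / (k : ℝ)) - 1)) atTop (nhds 1) := by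
    have hd : HasDerivAt Real.log ((1 : ℝ)⁻¹) 1 := Real.hasDerivAt_log one_ne_zero
    have h := aux_slope hd hvk hvne
    simpa using h
  -- main ratio limit
  have hratio : Tendsto (fun k : ℕ => (G (k + 1) - G k) / f k) atTop (nhds 1) := by
    have hlim : Tendsto (fun k : ℕ =>
        (((1 + 1 / (k : ℝ)) ^ a - 1) / ((1 + 1 / (k : ℝ)) - 1)) / a
          + ((u k ^ γ - 1) / (u k - 1)) *
              ((Real.log (1 + 1 / (k : ℝ)) - Real.log 1) / ((1 + 1 / (k : ℝ)) - 1)) *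
              (1 / Real.log ((k : ℝ) + 1)) / a)
        atTop (nhds (a / a + γ * 1 * 0 / a)) :=
      (hP.div_const a).add (((hQ.mul hR).mul hinvL1).div_const a)
    rw [div_self (ne_of_gt ha)] at hlim
    simp only [mul_one, mul_zero, zero_div, add_zero] at hlim
    refine hlim.congr' ?_
    filter_upwards [eventually_ge_atTop 2] with k hk
    have hk2 : (2 : ℝ) ≤ (k : ℝ) := by exact_mod_cast hk
    have hx : (0 : ℝ) < (k : ℝ) := by linarith
    have hL0pos : 0 < Real.log (k : ℝ) := Real.log_pos (by linarith)
    have hL1pos : 0 < Real.log ((k : ℝ) + 1) := Real.log_pos (by linarith)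
    have hsplit := hlogsplit k (by omega)
    have hspos : 0 < Real.log (1 + 1 / (k : ℝ)) :=
      Real.log_pos (by nlinarith [one_div_pos.mpr hx])
    have hcast1 : ((k + 1 : ℕ) : ℝ) = (k : ℝ) + 1 := by push_cast; ring
    have h1 : ((k : ℝ) + 1) ^ a = (k : ℝ) ^ a * (1 + 1 / (k : ℝ)) ^ a := by
      rw [show (k : ℝ) + 1 = (k : ℝ) * (1 + 1 / (k : ℝ)) by field_simp,
        Real.mul_rpow hx.le (by positivity)]
    have h2 : (k : ℝ) ^ (-β') = (k : ℝ) ^ a / (k : ℝ) := by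
      rw [show -β' = a - 1 by rw [ha_def]; ring, Real.rpow_sub hx, Real.rpow_one]
    have h3 : Real.log (k : ℝ) ^ γ
        = (Real.log (k : ℝ) / Real.log ((k : ℝ) + 1)) ^ γ * Real.log ((k : ℝ) + 1) ^ γ := by
      rw [Real.div_rpow hL0pos.le hL1pos.le]
      have hne : Real.log ((k : ℝ) + 1) ^ γ ≠ 0 := ne_of_gt (Real.rpow_pos_of_pos hL1pos γ)
      field_simp
    have hL0eq : Real.log (k : ℝ) = Real.log ((k : ℝ) + 1) - Real.log (1 + 1 / (k : ℝ)) := by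
      linarith
    have hxa : ((k : ℝ) ^ a) ≠ 0 := ne_of_gt (Real.rpow_pos_of_pos hx a)
    have hL1g : (Real.log ((k : ℝ) + 1) ^ γ) ≠ 0 := ne_of_gt (Real.rpow_pos_of_pos hL1pos γ)
    simp only [hG_def, hf_def, hu_def]
    rw [hcast1, h1, h2, h3, hL0eq]
    exact aux_id (k : ℝ) _ _ _ _ _ _ a (ne_of_gt hx) (ne_of_gt ha) (ne_of_gt hL1pos)
      (ne_of_gt hspos) hL1g hxa
  -- G tends to infinity
  have hGtop : Tendsto G atTop atTop := by
    have hlo := isLittleO_log_rpow_rpow_atTop (-γ) (show (0 : ℝ) < a / 2 by positivity)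
    rw [Asymptotics.isLittleO_iff] at hlo
    have hev : ∀ᶠ x : ℝ in atTop, x ^ (a / 2) ≤ x ^ a * Real.log x ^ γ := by
      filter_upwards [hlo (show (0 : ℝ) < 1 by norm_num), eventually_ge_atTop (3 : ℝ)]
        with x hb hx3
      have hxpos : (0 : ℝ) < x := by linarith
      have hlpos : 0 < Real.log x := Real.log_pos (by linarith)
      have h4 : Real.log x ^ (-γ) ≤ x ^ (a / 2) := by
        rw [Real.norm_of_nonneg (Real.rpow_nonneg hlpos.le _),
          Real.norm_of_nonneg (Real.rpow_nonneg hxpos.le _), one_mul] at hb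
        exact hb
      have h5 : 1 ≤ x ^ (a / 2) * Real.log x ^ γ := by
        have hg : Real.log x ^ γ = (Real.log x ^ (-γ))⁻¹ := by
          rw [← Real.rpow_neg hlpos.le, neg_neg]
        rw [hg, ← div_eq_mul_inv, le_div_iff₀ (Real.rpow_pos_of_pos hlpos _), one_mul]
        exact h4
      calc x ^ (a / 2) = x ^ (a / 2) * 1 := by ring
        _ ≤ x ^ (a / 2) * (x ^ (a / 2) * Real.log x ^ γ) :=
            mul_le_mul_of_nonneg_left h5 (Real.rpow_nonneg hxpos.le _)
        _ = x ^ (a / 2 + a / 2) * Real.log x ^ γ := by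
            rw [Real.rpow_add hxpos]; ring
        _ = x ^ a * Real.log x ^ γ := by norm_num
    have h6 : Tendsto (fun x : ℝ => x ^ a * Real.log x ^ γ) atTop atTop :=
      tendsto_atTop_mono' _ hev (tendsto_rpow_atTop (by positivity))
    exact (h6.comp hcast).atTop_div_const ha
  -- f is positive
  have hfpos : ∀ k : ℕ, 1 ≤ k → 0 < f k := by
    intro k hk
    have hk0 : (0 : ℝ) < (k : ℝ) := by exact_mod_cast hk
    have hk1 : (1 : ℝ) ≤ (k : ℝ) := by exact_mod_cast hk
    have hlog : 0 < Real.log ((k : ℝ) + 1) := Real.log_pos (by linarith)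
    exact mul_pos (Real.rpow_pos_of_pos hk0 _) (Real.rpow_pos_of_pos hlog _)
  -- choose cutoff N
  have hev2 : ∀ᶠ k : ℕ in atTop, f k / 2 ≤ G (k + 1) - G k ∧ 1 ≤ k := by
    have hhalf : ∀ᶠ k : ℕ in atTop, (1 : ℝ) / 2 ≤ (G (k + 1) - G k) / f k :=
      hratio.eventually (eventually_ge_nhds (by norm_num))
    filter_upwards [hhalf, eventually_ge_atTop 1] with k h1 h2
    refine ⟨?_, h2⟩
    have hf := hfpos k h2
    have h := mul_le_mul_of_nonneg_right h1 hf.le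
    rw [div_mul_cancel₀ _ (ne_of_gt hf)] at h
    linarith
  obtain ⟨N, hN⟩ := eventually_atTop.mp hev2
  set g : ℕ → ℝ := fun k => if k < N then 0 else G (k + 1) - G k with hg_def
  have hgval : ∀ k, N ≤ k → g k = G (k + 1) - G k := by
    intro k hk
    simp [hg_def, if_neg (not_lt.mpr hk)]
  have hgpos : ∀ k, N ≤ k → 0 < g k := by
    intro k hk
    have h := hN k hk
    have hf := hfpos k h.2
    rw [hgval k hk]
    linarith [h.1]
  have hg_nonneg : ∀ k, 0 ≤ g k := by
    intro k
    by_cases h : k < N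
    · simp [hg_def, h]
    · exact (hgpos k (not_lt.mp h)).le
  have hgsum : ∀ n, N ≤ n → ∑ k ∈ Finset.range n, g k = G n - G N := by
    intro n hn
    rw [Finset.range_eq_Ico, ← Finset.sum_Ico_consecutive _ (Nat.zero_le N) hn]
    have e1 : ∑ k ∈ Finset.Ico 0 N, g k = 0 :=
      Finset.sum_eq_zero fun k hk => by simp [hg_def, (Finset.mem_Ico.mp hk).2]
    have e2 : ∑ k ∈ Finset.Ico N n, g k = ∑ k ∈ Finset.Ico N n, (G (k + 1) - G k) :=
      Finset.sum_congr rfl fun k hk => hgval k (Finset.mem_Ico.mp hk).1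
    rw [e1, e2, Finset.sum_Ico_eq_sub _ hn, Finset.sum_range_sub G, Finset.sum_range_sub G]
    ring
  have hGsumtop : Tendsto (fun n => ∑ k ∈ Finset.range n, g k) atTop atTop := by
    refine (tendsto_atTop_add_const_right atTop (-G N) hGtop).congr' ?_
    filter_upwards [eventually_ge_atTop N] with n hn
    rw [hgsum n hn]
    ring
  have hlo : (fun k => f k - g k) =o[atTop] g := by
    rw [Asymptotics.isLittleO_iff_tendsto' ?side]
    case side =>
      filter_upwards [eventually_ge_atTop N] with k hk h0
      exact absurd h0 (ne_of_gt (hgpos k hk))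
    have hinv : Tendsto (fun k => f k / (G (k + 1) - G k)) atTop (nhds 1) := by
      have h := hratio.inv₀ one_ne_zero
      simpa [inv_div] using h
    have h0 : Tendsto (fun k => f k / (G (k + 1) - G k) - 1) atTop (nhds 0) := by
      simpa using hinv.sub (tendsto_const_nhds (x := (1 : ℝ)))
    refine h0.congr' ?_
    filter_upwards [eventually_ge_atTop N] with k hk
    have hg := hgpos k hk
    rw [← hgval k hk, sub_div, div_self (ne_of_gt hg)]
  have hsum_lo := hlo.sum_range hg_nonneg hGsumtop
  have hmain : Tendsto (fun n : ℕ => (∑ k ∈ Finset.range n, f k) / G n) atTop (nhds 1) := by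
    have hdiv : Tendsto (fun n : ℕ =>
        ((∑ k ∈ Finset.range n, f k) - ∑ k ∈ Finset.range n, g k)
          / ∑ k ∈ Finset.range n, g k) atTop (nhds 0) := by
      have h := hsum_lo.tendsto_div_nhds_zero
      refine h.congr fun n => ?_
      rw [Finset.sum_sub_distrib]
    have h9 : Tendsto (fun n : ℕ => (∑ k ∈ Finset.range n, f k) / (G n - G N))
        atTop (nhds 1) := by
      have h := hdiv.add (tendsto_const_nhds (x := (1 : ℝ)))
      rw [zero_add] at h
      refine h.congr' ?_
      filter_upwards [eventually_ge_atTop N, hGtop.eventually_ge_atTop (G N + 1)] with n hn hG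
      have hD : G n - G N ≠ 0 := by
        have : (1 : ℝ) ≤ G n - G N := by linarith
        linarith
      rw [hgsum n hn]
      field_simp
      ring
    have h10 : Tendsto (fun n : ℕ => (G n - G N) / G n) atTop (nhds 1) := by
      have h := (tendsto_const_nhds (x := (1 : ℝ))).sub
        ((tendsto_const_nhds (x := G N)).div_atTop hGtop)
      rw [sub_zero] at h
      refine h.congr' ?_
      filter_upwards [hGtop.eventually_gt_atTop 0] with n hG
      field_simp
    have h := h9.mul h10
    rw [mul_one] at h
    refine h.congr' ?_
    filter_upwards [hGtop.eventually_gt_atTop 0, hGtop.eventually_ge_atTop (G N + 1)]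
      with n h0 h1
    have hD : G n - G N ≠ 0 := by
      have : (1 : ℝ) ≤ G n - G N := by linarith
      linarith
    field_simp
  -- ratio of consecutive G's
  have hFrat : Tendsto (fun n : ℕ => G (n + 1) / G n) atTop (nhds 1) := by
    have hA : Tendsto (fun n : ℕ => (1 + 1 / (n : ℝ)) ^ a) atTop (nhds 1) := by
      have hc := (Real.continuousAt_rpow_const 1 a (Or.inl one_ne_zero)).tendsto.comp hvk
      simpa [Real.one_rpow, Function.comp_def] using hc
    have hB : Tendsto (fun n : ℕ => Real.log ((n : ℝ) + 1) / Real.log (n : ℝ))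
        atTop (nhds 1) := by
      have h : Tendsto (fun k : ℕ =>
          1 + Real.log (1 + 1 / (k : ℝ)) * (1 / Real.log (k : ℝ))) atTop (nhds 1) := by
        simpa using tendsto_const_nhds.add (hs0.mul hinvL0)
      refine h.congr' ?_
      filter_upwards [eventually_ge_atTop 2] with k hk
      have hk2 : (2 : ℝ) ≤ (k : ℝ) := by exact_mod_cast hk
      have hL0pos : 0 < Real.log (k : ℝ) := Real.log_pos (by linarith)
      rw [hlogsplit k (by omega)]
      field_simp
    have hBγ : Tendsto (fun n : ℕ =>
        (Real.log ((n : ℝ) + 1) / Real.log (n : ℝ)) ^ γ) atTop (nhds 1) := by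
      have hc := (Real.continuousAt_rpow_const 1 γ (Or.inl one_ne_zero)).tendsto.comp hB
      simpa [Real.one_rpow, Function.comp_def] using hc
    have h := hA.mul hBγ
    rw [mul_one] at h
    refine h.congr' ?_
    filter_upwards [eventually_ge_atTop 2] with n hn
    have hn2 : (2 : ℝ) ≤ (n : ℝ) := by exact_mod_cast hn
    have hx : (0 : ℝ) < (n : ℝ) := by linarith
    have hL0pos : 0 < Real.log (n : ℝ) := Real.log_pos (by linarith)
    have hL1pos : 0 < Real.log ((n : ℝ) + 1) := Real.log_pos (by linarith)
    have hcast1 : ((n + 1 : ℕ) : ℝ) = (n : ℝ) + 1 := by push_cast; ring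
    have h1 : ((n : ℝ) + 1) ^ a = (n : ℝ) ^ a * (1 + 1 / (n : ℝ)) ^ a := by
      rw [show (n : ℝ) + 1 = (n : ℝ) * (1 + 1 / (n : ℝ)) by field_simp,
        Real.mul_rpow hx.le (by positivity)]
    have hxa : ((n : ℝ) ^ a) ≠ 0 := ne_of_gt (Real.rpow_pos_of_pos hx a)
    have hL0g : (Real.log (n : ℝ) ^ γ) ≠ 0 := ne_of_gt (Real.rpow_pos_of_pos hL0pos γ)
    simp only [hG_def]
    rw [hcast1, h1, Real.div_rpow hL1pos.le hL0pos.le]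
    field_simp
  -- final assembly
  have hf0 : Tendsto (fun n : ℕ => f 0 / G n) atTop (nhds 0) :=
    tendsto_const_nhds.div_atTop hGtop
  have hS1 : Tendsto (fun n : ℕ => (∑ k ∈ Finset.range (n + 1), f k) / G (n + 1))
      atTop (nhds 1) := by
    have h := hmain.comp (tendsto_add_atTop_nat 1)
    simpa [Function.comp_def] using h
  have htot := (hS1.mul hFrat).sub hf0
  rw [mul_one, sub_zero] at htot
  refine htot.congr' ?_
  filter_upwards [hGtop.eventually_gt_atTop 0,
    (hGtop.comp (tendsto_add_atTop_nat 1)).eventually_gt_atTop 0] with n h0 h1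
  have h1' : 0 < G (n + 1) := by simpa [Function.comp] using h1
  have hIcc : (∑ k ∈ Finset.Icc 1 n, (k : ℝ) ^ (-β') * Real.log ((k : ℝ) + 1) ^ γ)
      = (∑ k ∈ Finset.range (n + 1), f k) - f 0 := by
    rw [Finset.sum_range_succ' f n]
    rw [← Finset.Ico_add_one_right_eq_Icc, Finset.sum_Ico_eq_sum_range]
    simp only [hf_def, Nat.add_sub_cancel]
    push_cast
    simp [add_comm]
  have hGn : (n : ℝ) ^ a * Real.log (n : ℝ) ^ γ / a = G n := rfl
  rw [hIcc, hGn]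
  field_simp
end

section
/- Let α > −2 and define β > 1 by −α = 2 − 1/(β−1). With u_k proportional to k^{-β}, S_n = ∑_{k≤n} u_k, R_n = ∑_{k>n} u_k, and C_n = [S_{n−1}, S_n]², suppose ρ(x,y) = Θ(dist((x,y),(1,1))^α) near (1,1) in L¹-distance. Then ∫_{C_n} ρ = Θ(n^{-3}) as n → ∞. -/
open Filter MeasureTheory Real

lemma tail_upper {β : ℝ} (hβ : 1 < β) (n : ℕ) (hn : 1 ≤ n) :
    ∑' k : ℕ, ((k + (n + 1) : ℕ) : ℝ) ^ (-β) ≤ (n : ℝ) ^ (1 - β) / (β - 1) := by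
  have hnpos : (0:ℝ) < n := by exact_mod_cast hn
  apply Real.tsum_le_of_sum_range_le (fun k => Real.rpow_nonneg (by positivity) _)
  intro m
  have hanti : AntitoneOn (fun x : ℝ => x ^ (-β)) (Set.Icc (n:ℝ) ((n:ℝ) + m)) := by
    intro x hx y hy hxy
    exact Real.rpow_le_rpow_of_nonpos (lt_of_lt_of_le hnpos hx.1) hxy (by linarith)
  have h1 : ∑ i ∈ Finset.range m, ((i + (n + 1) : ℕ) : ℝ) ^ (-β)
      ≤ ∫ x in (n:ℝ)..(n:ℝ) + m, x ^ (-β) := by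
    have := hanti.sum_le_integral
    refine le_trans (le_of_eq ?_) this
    apply Finset.sum_congr rfl
    intro i _
    congr 1
    push_cast; ring
  refine h1.trans ?_
  rw [integral_rpow (Or.inr ⟨by
      intro h
      have : β = 1 := neg_inj.mp h
      linarith, by
      rw [Set.uIcc_of_le (le_add_of_nonneg_right (Nat.cast_nonneg m))]
      intro h
      have := h.1
      linarith⟩)]
  have e : -β + 1 = 1 - β := by ring
  rw [e]
  have hB : (0:ℝ) ≤ ((n:ℝ) + m) ^ (1 - β) := Real.rpow_nonneg (by positivity) _
  have heq : (((n:ℝ) + m) ^ (1-β) - (n:ℝ) ^ (1-β)) / (1 - β)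
      = ((n:ℝ) ^ (1-β) - ((n:ℝ) + m) ^ (1-β)) / (β - 1) := by
    have h1 : (1:ℝ) - β ≠ 0 := by intro h; linarith
    have h2 : β - 1 ≠ 0 := by intro h; linarith
    field_simp
    ring
  rw [heq]
  apply (div_le_div_iff_of_pos_right (by linarith)).mpr
  linarith

lemma tail_lower {β : ℝ} (hβ : 1 < β) (n : ℕ) (hn : 1 ≤ n) :
    (2:ℝ) ^ (-β) * (n : ℝ) ^ (1 - β) ≤ ∑' k : ℕ, ((k + (n + 1) : ℕ) : ℝ) ^ (-β) := by
  have hnpos : (0:ℝ) < n := by exact_mod_cast hn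
  have hsum : Summable (fun k : ℕ => ((k + (n + 1) : ℕ) : ℝ) ^ (-β)) := by
    have h := Real.summable_nat_rpow (p := -β) |>.mpr (by linarith)
    have := (summable_nat_add_iff (n + 1)).mpr h
    simpa using this
  have h1 : ∑ i ∈ Finset.range n, ((2 * n : ℕ) : ℝ) ^ (-β)
      ≤ ∑ i ∈ Finset.range n, ((i + (n + 1) : ℕ) : ℝ) ^ (-β) := by
    apply Finset.sum_le_sum
    intro i hi
    apply Real.rpow_le_rpow_of_nonpos (by positivity) ?_ (by linarith)
    have : i + (n+1) ≤ 2 * n := by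
      have := Finset.mem_range.mp hi; omega
    exact_mod_cast Nat.cast_le.mpr this
  have h2 := Summable.sum_le_tsum (Finset.range n)
      (fun i _ => Real.rpow_nonneg (by positivity) _) hsum
  have h3 : ∑ i ∈ Finset.range n, ((2 * n : ℕ) : ℝ) ^ (-β)
      = (2:ℝ)^(-β) * (n:ℝ)^(1-β) := by
    rw [Finset.sum_const, Finset.card_range]
    push_cast
    rw [Real.mul_rpow (by norm_num) (by positivity)]
    rw [show (1:ℝ) - β = 1 + (-β) by ring, Real.rpow_add hnpos, Real.rpow_one]
    ring
  linarith


lemma box_integral_bounds {f : ℝ × ℝ → ℝ} (hf : Measurable f) {a b m M : ℝ} (hab : a ≤ b)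
    (hm : 0 ≤ m)
    (hbd : ∀ p ∈ Set.Icc ((a, a) : ℝ × ℝ) (b, b), m ≤ f p ∧ f p ≤ M) :
    m * (b - a) ^ 2 ≤ (∫ x in a..b, ∫ y in a..b, f (x, y)) ∧
      (∫ x in a..b, ∫ y in a..b, f (x, y)) ≤ M * (b - a) ^ 2 := by
  have hMm : m ≤ M := by
    have := hbd (a, a) ⟨⟨le_refl _, le_refl _⟩, ⟨hab, hab⟩⟩
    linarith [this.1, this.2]
  have hM0 : 0 ≤ M := hm.trans hMm
  set g : ℝ → ℝ := fun x => ∫ y in a..b, f (x, y) with hg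
  -- inner bounds
  have hinner : ∀ x ∈ Set.Icc a b, m * (b - a) ≤ g x ∧ g x ≤ M * (b - a) := by
    intro x hx
    have hmemb : ∀ y ∈ Set.Icc a b, m ≤ f (x, y) ∧ f (x, y) ≤ M := fun y hy =>
      hbd (x, y) ⟨⟨hx.1, hy.1⟩, ⟨hx.2, hy.2⟩⟩
    have hmeas : Measurable (fun y => f (x, y)) := hf.comp measurable_prodMk_left
    have hint : IntervalIntegrable (fun y => f (x, y)) volume a b := by
      rw [intervalIntegrable_iff, Set.uIoc_of_le hab]
      refine Integrable.mono' (integrable_const M) hmeas.aestronglyMeasurable ?_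
      rw [ae_restrict_iff' measurableSet_Ioc]
      filter_upwards with y hy
      have := hmemb y ⟨le_of_lt hy.1, hy.2⟩
      rw [Real.norm_eq_abs, abs_le]
      constructor <;> linarith [this.1, this.2]
    constructor
    · have h := intervalIntegral.integral_mono_on hab intervalIntegrable_const hint
        (fun y hy => (hmemb y hy).1)
      simpa [smul_eq_mul, mul_comm] using h
    · have h := intervalIntegral.integral_mono_on hab hint intervalIntegrable_const
        (fun y hy => (hmemb y hy).2)
      simpa [smul_eq_mul, mul_comm] using h
  -- g measurable
  have hgm : StronglyMeasurable g := by
    have h1 : StronglyMeasurable fun x => ∫ y in Set.Ioc a b, f (x, y) :=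
      hf.stronglyMeasurable.integral_prod_right'
        (ν := volume.restrict (Set.Ioc a b))
    have h2 : StronglyMeasurable fun x => ∫ y in Set.Ioc b a, f (x, y) :=
      hf.stronglyMeasurable.integral_prod_right'
        (ν := volume.restrict (Set.Ioc b a))
    have : g = fun x => (∫ y in Set.Ioc a b, f (x, y)) - ∫ y in Set.Ioc b a, f (x, y) := by
      funext x
      simp only [hg]
      rfl
    rw [this]
    exact h1.sub h2
  have hgint : IntervalIntegrable g volume a b := by
    rw [intervalIntegrable_iff, Set.uIoc_of_le hab]
    refine Integrable.mono' (integrable_const (M * (b - a))) hgm.aestronglyMeasurable ?_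
    rw [ae_restrict_iff' measurableSet_Ioc]
    filter_upwards with x hx
    have h := hinner x ⟨le_of_lt hx.1, hx.2⟩
    rw [Real.norm_eq_abs, abs_le]
    have : 0 ≤ m * (b - a) := mul_nonneg hm (by linarith)
    constructor <;> linarith [h.1, h.2]
  constructor
  · have h := intervalIntegral.integral_mono_on hab intervalIntegrable_const hgint
      (fun x hx => (hinner x hx).1)
    simp only [intervalIntegral.integral_const, smul_eq_mul] at h
    nlinarith [h]
  · have h := intervalIntegral.integral_mono_on hab hgint intervalIntegrable_const
      (fun x hx => (hinner x hx).2)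
    simp only [intervalIntegral.integral_const, smul_eq_mul] at h
    nlinarith [h]


lemma rpow_interval_bounds {α A B t w : ℝ} (hA : 0 < A) (ht : 0 < t)
    (h1 : A * t ≤ w) (h2 : w ≤ B * t) :
    min (A ^ α) (B ^ α) * t ^ α ≤ w ^ α ∧ w ^ α ≤ max (A ^ α) (B ^ α) * t ^ α := by
  have hw : 0 < w := lt_of_lt_of_le (by positivity) h1
  set s : ℝ := w / t with hs
  have hsA : A ≤ s := (le_div_iff₀ ht).mpr h1
  have hsB : s ≤ B := (div_le_iff₀ ht).mpr h2
  have hspos : 0 < s := by positivity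
  have hwe : w = s * t := by rw [hs]; field_simp
  have hmul : w ^ α = s ^ α * t ^ α := by
    rw [hwe, Real.mul_rpow (le_of_lt hspos) (le_of_lt ht)]
  have htα : (0:ℝ) ≤ t ^ α := Real.rpow_nonneg (le_of_lt ht) _
  rcases le_or_gt 0 α with hα | hα
  · have l1 : A ^ α ≤ s ^ α := Real.rpow_le_rpow (le_of_lt hA) hsA hα
    have l2 : s ^ α ≤ B ^ α := Real.rpow_le_rpow (le_of_lt hspos) hsB hα
    constructor
    · rw [hmul]
      exact mul_le_mul_of_nonneg_right ((min_le_left _ _).trans l1) htα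
    · rw [hmul]
      exact mul_le_mul_of_nonneg_right (l2.trans (le_max_right _ _)) htα
  · have l1 : B ^ α ≤ s ^ α := Real.rpow_le_rpow_of_nonpos hspos hsB (le_of_lt hα)
    have l2 : s ^ α ≤ A ^ α := Real.rpow_le_rpow_of_nonpos hA hsA (le_of_lt hα)
    constructor
    · rw [hmul]
      exact mul_le_mul_of_nonneg_right ((min_le_right _ _).trans l1) htα
    · rw [hmul]
      exact mul_le_mul_of_nonneg_right (l2.trans (le_max_left _ _)) htα

/-- For `α > −2`, `β` defined by `−α = 2 − 1/(β−1)`, and `ρ` diverging as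
`dist((x,y),(1,1))^α` near the corner `(1,1)` (L¹-distance), the mass attributed
by `ρ` to the diagonal box `C_n = [S_{n−1}, S_n]²` is `Θ(n^{-3})`. -/
theorem corner_box_mass_theta (α β : ℝ) (hα : -2 < α) (hβ : 1 < β)
    (hdef : -α = 2 - 1 / (β - 1))
    (Z : ℝ) (hZ : Z = ∑' k : ℕ, (k : ℝ) ^ (-β))
    (u : ℕ → ℝ) (hu : ∀ k, u k = (k : ℝ) ^ (-β) / Z)
    (S : ℕ → ℝ) (hS : ∀ n, S n = ∑ k ∈ Finset.Icc 1 n, u k)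
    (ρ : ℝ × ℝ → ℝ) (hρm : Measurable ρ)
    (hρ : ∃ c₁ c₂ δ : ℝ, 0 < c₁ ∧ 0 < c₂ ∧ 0 < δ ∧
      ∀ p ∈ Set.Icc ((0 : ℝ), (0 : ℝ)) (1, 1),
        |p.1 - 1| + |p.2 - 1| < δ →
        c₁ * (|p.1 - 1| + |p.2 - 1|) ^ α ≤ ρ p ∧
        ρ p ≤ c₂ * (|p.1 - 1| + |p.2 - 1|) ^ α) :
    ∃ c C : ℝ, 0 < c ∧ 0 < C ∧ ∀ᶠ n : ℕ in atTop,
      c * (n : ℝ) ^ (-3 : ℝ) ≤ ∫ x in S (n - 1)..S n, ∫ y in S (n - 1)..S n, ρ (x, y) ∧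
      ∫ x in S (n - 1)..S n, ∫ y in S (n - 1)..S n, ρ (x, y) ≤ C * (n : ℝ) ^ (-3 : ℝ) := by
  obtain ⟨c₁, c₂, δ, hc₁, hc₂, hδ, hbound⟩ := hρ
  have hβ1 : (0:ℝ) < β - 1 := by linarith
  have hsum : Summable (fun k : ℕ => (k : ℝ) ^ (-β)) :=
    Real.summable_nat_rpow.mpr (by linarith)
  have hZ1 : (1:ℝ) ≤ Z := by
    have h := hsum.le_tsum 1 (fun j _ => Real.rpow_nonneg (Nat.cast_nonneg j) _)
    rw [hZ]
    simpa using h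
  have hZpos : (0:ℝ) < Z := by linarith
  set r : ℕ → ℝ := fun n => ∑' k : ℕ, ((k + (n + 1) : ℕ) : ℝ) ^ (-β) with hr
  have hrnonneg : ∀ n, 0 ≤ r n := fun n =>
    tsum_nonneg (fun k => Real.rpow_nonneg (Nat.cast_nonneg _) _)
  have hrS : ∀ n, S n = 1 - r n / Z := by
    intro n
    have h1 : ∑ i ∈ Finset.range (n + 1), ((i:ℝ)) ^ (-β) + r n = Z := by
      rw [hZ, hr]
      exact hsum.sum_add_tsum_nat_add (n + 1)
    have h2 : ∑ k ∈ Finset.Icc 1 n, u k = (∑ i ∈ Finset.range (n + 1), ((i:ℝ)) ^ (-β)) / Z := by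
      rw [Finset.sum_congr rfl (fun k _ => hu k), ← Finset.sum_div]
      congr 1
      rw [Finset.sum_range_succ']
      have h0 : (((0:ℕ)):ℝ) ^ (-β) = 0 := by
        rw [Nat.cast_zero, Real.zero_rpow (by intro h; simp at h; linarith)]
      rw [h0, add_zero, show Finset.Icc 1 n = Finset.Ico 1 (n+1) from (Finset.Ico_add_one_right_eq_Icc 1 n).symm,
        Finset.sum_Ico_eq_sum_range]
      simp only [Nat.add_sub_cancel]
      apply Finset.sum_congr rfl
      intro i _
      congr 2
      omega
    rw [hS, h2]
    field_simp
    linarith [h1]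
  have hrstep : ∀ m : ℕ, r m = (((m + 1 : ℕ)) : ℝ) ^ (-β) + r (m + 1) := by
    intro m
    have hsm : Summable (fun k : ℕ => ((k + (m + 1) : ℕ) : ℝ) ^ (-β)) := by
      have := (summable_nat_add_iff (f := fun k : ℕ => ((k:ℝ)) ^ (-β)) (m + 1)).mpr hsum
      exact_mod_cast this
    show ∑' k : ℕ, ((k + (m + 1) : ℕ) : ℝ) ^ (-β)
        = (((m + 1 : ℕ)) : ℝ) ^ (-β) + ∑' k : ℕ, ((k + (m + 1 + 1) : ℕ) : ℝ) ^ (-β)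
    rw [hsm.tsum_eq_zero_add]
    congr 1
    · norm_num
    · apply tsum_congr
      intro k
      congr 2
      omega
  have hexp : (1 - β) * α - 2 * β = -3 := by
    have h1 : β - 1 ≠ 0 := by linarith
    field_simp at hdef
    nlinarith [hdef]
  set A : ℝ := 2 * 2 ^ (-β) / Z with hA
  set B : ℝ := 2 * 2 ^ (β - 1) / ((β - 1) * Z) with hB
  have h2βpos : (0:ℝ) < (2:ℝ) ^ (-β) := Real.rpow_pos_of_pos (by norm_num) _
  have h2β1pos : (0:ℝ) < (2:ℝ) ^ (β - 1) := Real.rpow_pos_of_pos (by norm_num) _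
  have hApos : 0 < A := by rw [hA]; positivity
  have hBpos : 0 < B := by rw [hB]; positivity
  have hAαpos : 0 < A ^ α := Real.rpow_pos_of_pos hApos _
  have hBαpos : 0 < B ^ α := Real.rpow_pos_of_pos hBpos _
  have hminpos : 0 < min (A ^ α) (B ^ α) := lt_min hAαpos hBαpos
  have hmaxpos : 0 < max (A ^ α) (B ^ α) := lt_of_lt_of_le hAαpos (le_max_left _ _)
  refine ⟨c₁ * min (A ^ α) (B ^ α) / Z ^ 2, c₂ * max (A ^ α) (B ^ α) / Z ^ 2,
    div_pos (mul_pos hc₁ hminpos) (by positivity),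
    div_pos (mul_pos hc₂ hmaxpos) (by positivity), ?_⟩
  have htend : Tendsto (fun n : ℕ => ((n:ℝ)) ^ (1 - β)) atTop (nhds 0) := by
    have h := tendsto_rpow_neg_atTop hβ1
    have he : (fun x : ℝ => x ^ (-(β - 1))) = fun x : ℝ => x ^ (1 - β) := by
      funext x; congr 1; ring
    rw [he] at h
    exact h.comp tendsto_natCast_atTop_atTop
  have htend2 : Tendsto (fun n : ℕ => (((n - 1 : ℕ)):ℝ) ^ (1 - β)) atTop (nhds 0) :=
    htend.comp (tendsto_sub_atTop_nat 1)
  have hsmall : ∀ᶠ n : ℕ in atTop, (((n - 1 : ℕ)):ℝ) ^ (1 - β) < δ * ((β - 1) * Z) / 2 :=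
    htend2.eventually_lt_const (by positivity)
  filter_upwards [eventually_ge_atTop 2, hsmall] with n hn2 hsm
  set m1 := n - 1 with hm1def
  have hm1 : m1 + 1 = n := by omega
  have hnge : 1 ≤ n := by omega
  have hm1ge : 1 ≤ m1 := by omega
  have hnpos : (0:ℝ) < n := Nat.cast_pos.mpr (by omega)
  have hm1pos : (0:ℝ) < m1 := Nat.cast_pos.mpr (by omega)
  have hnR2 : (2:ℝ) ≤ (n:ℝ) := by exact_mod_cast hn2
  have hm1cast : (m1:ℝ) = (n:ℝ) - 1 := by
    have : ((m1 + 1 : ℕ) : ℝ) = (n:ℝ) := by exact_mod_cast congrArg (Nat.cast (R := ℝ)) hm1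
    push_cast at this
    linarith
  -- tail bounds
  have hrlow : 2 ^ (-β) * (n:ℝ) ^ (1 - β) ≤ r n := tail_lower hβ n hnge
  have hrup : r m1 ≤ (m1:ℝ) ^ (1 - β) / (β - 1) := tail_upper hβ m1 hm1ge
  have hrstep' : r m1 = ((n:ℝ)) ^ (-β) + r n := by
    have h := hrstep m1
    rw [hm1] at h
    exact_mod_cast h
  have hrmono : r n ≤ r m1 := by
    have := Real.rpow_nonneg hnpos.le (-β)
    linarith
  have hrn_pos : 0 < r n := lt_of_lt_of_le (by positivity) hrlow
  -- S facts
  have hab : S m1 ≤ S n := by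
    rw [hrS, hrS]
    have h : r n / Z ≤ r m1 / Z := by gcongr
    linarith
  have hba : S n - S m1 = (n:ℝ) ^ (-β) / Z := by
    rw [hrS, hrS, hrstep']
    ring
  have hS1 : S n ≤ 1 := by
    rw [hrS]
    have := div_nonneg (hrnonneg n) hZpos.le
    linarith
  have hS0 : 0 ≤ S m1 := by
    rw [hS]
    refine Finset.sum_nonneg fun k _ => ?_
    rw [hu]
    positivity
  set t := (n:ℝ) ^ (1 - β) with htdef
  have htpos : 0 < t := Real.rpow_pos_of_pos hnpos _
  have hd1 : A * t ≤ 2 * r n / Z := by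
    calc A * t = 2 * (2 ^ (-β) * t) / Z := by rw [hA]; ring
      _ ≤ 2 * r n / Z := by gcongr
  have hd3 : 2 * r m1 / Z ≤ B * t := by
    have hm1half : (n:ℝ) / 2 ≤ (m1:ℝ) := by rw [hm1cast]; linarith
    have h2 : (m1:ℝ) ^ (1 - β) ≤ ((n:ℝ) / 2) ^ (1 - β) :=
      Real.rpow_le_rpow_of_nonpos (by positivity) hm1half (by linarith)
    have h3 : ((n:ℝ) / 2) ^ (1 - β) = t * 2 ^ (β - 1) := by
      rw [Real.div_rpow hnpos.le (by norm_num), htdef, div_eq_mul_inv,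
        ← Real.rpow_neg (by norm_num : (0:ℝ) ≤ 2)]
      congr 1
      ring
    calc 2 * r m1 / Z ≤ 2 * ((m1:ℝ) ^ (1 - β) / (β - 1)) / Z := by gcongr
      _ ≤ 2 * (((n:ℝ) / 2) ^ (1 - β) / (β - 1)) / Z := by gcongr
      _ = B * t := by rw [h3, hB]; field_simp
  have hdhi_small : 2 * r m1 / Z < δ := by
    calc 2 * r m1 / Z ≤ 2 * ((m1:ℝ) ^ (1 - β) / (β - 1)) / Z := by gcongr
      _ < 2 * ((δ * ((β - 1) * Z) / 2) / (β - 1)) / Z := by gcongr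
      _ = δ := by field_simp
  -- pointwise bounds on the box
  have hpt : ∀ p ∈ Set.Icc ((S m1, S m1) : ℝ × ℝ) (S n, S n),
      c₁ * (min (A ^ α) (B ^ α) * t ^ α) ≤ ρ p ∧
        ρ p ≤ c₂ * (max (A ^ α) (B ^ α) * t ^ α) := by
    intro p hp
    simp only [Set.mem_Icc, Prod.mk_le_mk] at hp
    obtain ⟨⟨hx1, hy1⟩, hx2, hy2⟩ := hp
    have hx0 : 0 ≤ p.1 := le_trans hS0 hx1
    have hy0 : 0 ≤ p.2 := le_trans hS0 hy1
    have hxle : p.1 ≤ 1 := le_trans hx2 hS1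
    have hyle : p.2 ≤ 1 := le_trans hy2 hS1
    have hd : |p.1 - 1| + |p.2 - 1| = (1 - p.1) + (1 - p.2) := by
      rw [abs_of_nonpos (by linarith), abs_of_nonpos (by linarith)]
      ring
    have hSm1' := hrS m1
    have hSn' := hrS n
    have he2 : 2 * r n / Z = r n / Z + r n / Z := by ring
    have he3 : 2 * r m1 / Z = r m1 / Z + r m1 / Z := by ring
    have hdlo : 2 * r n / Z ≤ |p.1 - 1| + |p.2 - 1| := by
      rw [hd, he2]
      have h1 : r n / Z ≤ 1 - p.1 := by linarith
      have h2 : r n / Z ≤ 1 - p.2 := by linarith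
      linarith
    have hdhi : |p.1 - 1| + |p.2 - 1| ≤ 2 * r m1 / Z := by
      rw [hd, he3]
      have h1 : 1 - p.1 ≤ r m1 / Z := by linarith
      have h2 : 1 - p.2 ≤ r m1 / Z := by linarith
      linarith
    have hmem : p ∈ Set.Icc ((0:ℝ), (0:ℝ)) (1, 1) := by
      simp only [Set.mem_Icc, Prod.mk_le_mk]
      exact ⟨⟨hx0, hy0⟩, hxle, hyle⟩
    have hlt : |p.1 - 1| + |p.2 - 1| < δ := lt_of_le_of_lt hdhi hdhi_small
    obtain ⟨hb1, hb2⟩ := hbound p hmem hlt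
    have hri := rpow_interval_bounds (α := α) hApos htpos (hd1.trans hdlo) (hdhi.trans hd3)
    exact ⟨le_trans (mul_le_mul_of_nonneg_left hri.1 hc₁.le) hb1,
      le_trans hb2 (mul_le_mul_of_nonneg_left hri.2 hc₂.le)⟩
  have hm0 : 0 ≤ c₁ * (min (A ^ α) (B ^ α) * t ^ α) := by
    exact mul_nonneg hc₁.le (mul_nonneg hminpos.le (Real.rpow_nonneg htpos.le _))
  have hbox := box_integral_bounds hρm hab hm0 hpt
  rw [hba] at hbox
  have hkey : t ^ α * ((n:ℝ) ^ (-β) / Z) ^ 2 = (n:ℝ) ^ (-3:ℝ) / Z ^ 2 := by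
    have e1 : ((n:ℝ) ^ (1 - β)) ^ α = (n:ℝ) ^ ((1 - β) * α) :=
      (Real.rpow_mul hnpos.le _ _).symm
    have e2 : ((n:ℝ) ^ (-β)) ^ 2 = (n:ℝ) ^ (-β * 2) := by
      rw [← Real.rpow_natCast ((n:ℝ) ^ (-β)) 2, ← Real.rpow_mul hnpos.le]
      norm_num
    have e3 : (n:ℝ) ^ ((1 - β) * α) * (n:ℝ) ^ (-β * 2) = (n:ℝ) ^ (-3:ℝ) := by
      rw [← Real.rpow_add hnpos]
      congr 1
      linarith [hexp]
    rw [div_pow, htdef, e1, e2, ← e3]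
    ring
  constructor
  · refine le_trans (le_of_eq ?_) hbox.1
    linear_combination (-(c₁ * min (A ^ α) (B ^ α))) * hkey
  · refine le_trans hbox.2 (le_of_eq ?_)
    linear_combination (c₂ * max (A ^ α) (B ^ α)) * hkey
end
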